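/- arXiv:1312.3915 — 2 statements merged into one kernel-verified Lean document; each statement's English description precedes it below -/
import Mathlib

section
/- Compactness of weak-γ-convergence: every sequence of energy sets admits a subsequence that weak-γ-converges to some energy set, i.e. there is a subsequence with w_{Ω_{n_k}} converging strongly in L²(X,m) to some w ∈ H, with limit set {w > 0}. -/
open MeasureTheory Filter
open scoped ENNReal

namespace AbsSob

variable {X : Type*} [MeasurableSpace X]

/-- Abstract Sobolev setting: a Riesz subspace `H` of `L²(X,m)` with the Stone
property (H1)-(H2), together with a gradient-like map `D` satisfying (D1)-(D4). -/
structure Setting (X : Type*) [MeasurableSpace X] (m : Measure X) where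
  H : Set (X → ℝ)
  D : (X → ℝ) → X → ℝ
  zero_mem : (fun _ => (0 : ℝ)) ∈ H
  add_mem : ∀ ⦃u v : X → ℝ⦄, u ∈ H → v ∈ H → u + v ∈ H
  smul_mem : ∀ (c : ℝ) ⦃u : X → ℝ⦄, u ∈ H → c • u ∈ H
  sup_mem : ∀ ⦃u v : X → ℝ⦄, u ∈ H → v ∈ H → u ⊔ v ∈ H
  inf_mem : ∀ ⦃u v : X → ℝ⦄, u ∈ H → v ∈ H → u ⊓ v ∈ H
  stone : ∀ ⦃u : X → ℝ⦄, u ∈ H → u ⊓ 1 ∈ H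
  memL2 : ∀ ⦃u : X → ℝ⦄, u ∈ H → MemLp u 2 m
  gradL2 : ∀ ⦃u : X → ℝ⦄, u ∈ H → MemLp (D u) 2 m
  D1 : ∀ ⦃u : X → ℝ⦄, u ∈ H → ∀ᵐ x ∂m, 0 ≤ D u x
  D2 : ∀ ⦃u v : X → ℝ⦄, u ∈ H → v ∈ H → ∀ᵐ x ∂m, D (u + v) x ≤ D u x + D v x
  D3 : ∀ (c : ℝ) ⦃u : X → ℝ⦄, u ∈ H → ∀ᵐ x ∂m, D (c • u) x = |c| * D u x
  D4 : ∀ ⦃u v : X → ℝ⦄, u ∈ H → v ∈ H → ∀ᵐ x ∂m,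
      D (u ⊔ v) x = if v x < u x then D u x else D v x

variable {m : Measure X}

/-- Square of the `H`-norm: `‖u‖_H² = ‖u‖²_{L²} + ‖Du‖²_{L²}`. -/
noncomputable def normHsq (S : Setting X m) (u : X → ℝ) : ℝ :=
  ∫ x, (u x) ^ 2 ∂m + ∫ x, (S.D u x) ^ 2 ∂m

/-- Sobolev functions vanishing (m-a.e.) outside `Ω`. -/
def H0 (S : Setting X m) (Ω : Set X) : Set (X → ℝ) :=
  {u | u ∈ S.H ∧ ∀ᵐ x ∂m, x ∉ Ω → u x = 0}

/-- The functional `F^{a,f}(u) = ½∫|Du|² + (a/2)∫u² − ∫ f u`. -/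
noncomputable def F (S : Setting X m) (a : ℝ) (f : X → ℝ) (u : X → ℝ) : ℝ :=
  (1 / 2) * ∫ x, (S.D u x) ^ 2 ∂m + (a / 2) * ∫ x, (u x) ^ 2 ∂m - ∫ x, f x * u x ∂m

/-- `w` is a minimizer of `F^{a,f}` over `H₀(Ω)`. -/
def IsMinimizer (S : Setting X m) (Ω : Set X) (a : ℝ) (f : X → ℝ) (w : X → ℝ) : Prop :=
  w ∈ H0 S Ω ∧ ∀ u ∈ H0 S Ω, F S a f w ≤ F S a f u

/-- (ℋ2): the inclusion `H ↪ L²` is compact. -/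
def CompactEmbedding (S : Setting X m) : Prop :=
  ∀ u : ℕ → X → ℝ, (∀ n, u n ∈ S.H) → (∃ C : ℝ, ∀ n, normHsq S (u n) ≤ C) →
    ∃ (φ : ℕ → ℕ) (v : X → ℝ), StrictMono φ ∧ v ∈ S.H ∧
      Tendsto (fun k => ∫ x, (u (φ k) x - v x) ^ 2 ∂m) atTop (nhds 0)

/-- (ℋ3): lower semicontinuity of the gradient energy along `L²`-convergent
`H`-bounded sequences, whose limit moreover belongs to `H`. -/
def GradLSC (S : Setting X m) : Prop :=
  ∀ (u : ℕ → X → ℝ) (v : X → ℝ), (∀ n, u n ∈ S.H) →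
    (∃ C : ℝ, ∀ n, normHsq S (u n) ≤ C) →
    Tendsto (fun n => ∫ x, (u n x - v x) ^ 2 ∂m) atTop (nhds 0) →
    v ∈ S.H ∧ ∫ x, (S.D v x) ^ 2 ∂m ≤ liminf (fun n => ∫ x, (S.D (u n) x) ^ 2 ∂m) atTop

/-- Energy sets: Borel sets coinciding up to an `m`-null set with `{w_Ω > 0}`. -/
def IsEnergySet (S : Setting X m) (Ω : Set X) : Prop :=
  MeasurableSet Ω ∧ ∃ w, IsMinimizer S Ω 1 (fun _ => 1) w ∧ m (Ω \ {x | 0 < w x}) = 0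


/-! ### Auxiliary lemmas for statement 14 -/

section Aux

variable {X : Type*} [MeasurableSpace X] {m : Measure X}

private lemma aux_abs_le (a : ℝ) : |a| ≤ a ^ 2 / 4 + 1 := by
  nlinarith [sq_nonneg (|a| - 2), sq_abs a, abs_nonneg a]

private lemma aux_int_mul {f g : X → ℝ} (hf : MemLp f 2 m) (hg : MemLp g 2 m) :
    Integrable (fun x => f x * g x) m := by
  have h1 : Integrable (fun x => (f x + g x) ^ 2) m := by
    have := (hf.add hg).integrable_sq
    simpa [Pi.add_apply] using this
  have h2 := hf.integrable_sq
  have h3 := hg.integrable_sq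
  have he : (fun x => f x * g x) = fun x => (((f x + g x) ^ 2 - f x ^ 2) - g x ^ 2) / 2 := by
    funext x; ring
  rw [he]
  exact ((h1.sub h2).sub h3).div_const 2

variable (S : Setting X m)

private lemma aux_int [IsFiniteMeasure m] {u : X → ℝ} (hu : u ∈ S.H) : Integrable u m :=
  (S.memL2 hu).integrable one_le_two

private lemma aux_intsq {u : X → ℝ} (hu : u ∈ S.H) : Integrable (fun x => u x ^ 2) m :=
  (S.memL2 hu).integrable_sq

private lemma aux_intD {u : X → ℝ} (hu : u ∈ S.H) : Integrable (fun x => (S.D u x) ^ 2) m :=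
  (S.gradL2 hu).integrable_sq

private lemma aux_neg_mem {u : X → ℝ} (hu : u ∈ S.H) : -u ∈ S.H := by
  have := S.smul_mem (-1) hu
  rwa [neg_one_smul] at this

private lemma aux_D_zero : ∀ᵐ x ∂m, S.D (fun _ => (0 : ℝ)) x = 0 := by
  have h := S.D3 0 S.zero_mem
  have e : (0 : ℝ) • (fun _ : X => (0 : ℝ)) = (fun _ : X => (0 : ℝ)) := by
    funext x; simp
  rw [e] at h
  simpa using h

private lemma aux_D_neg {u : X → ℝ} (hu : u ∈ S.H) : ∀ᵐ x ∂m, S.D (-u) x = S.D u x := by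
  have h := S.D3 (-1) hu
  rw [neg_one_smul] at h
  simpa using h

private lemma aux_D_inf {u v : X → ℝ} (hu : u ∈ S.H) (hv : v ∈ S.H) :
    ∀ᵐ x ∂m, S.D (u ⊓ v) x = if u x < v x then S.D u x else S.D v x := by
  have e : u ⊓ v = -((-u) ⊔ (-v)) := by
    rw [← neg_inf, neg_neg]
  have h1 := aux_D_neg S (S.sup_mem (aux_neg_mem S hu) (aux_neg_mem S hv))
  have h2 := S.D4 (aux_neg_mem S hu) (aux_neg_mem S hv)
  have h3 := aux_D_neg S hu
  have h4 := aux_D_neg S hv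
  filter_upwards [h1, h2, h3, h4] with x e1 e2 e3 e4
  rw [e, e1, e2]
  simp only [Pi.neg_apply]
  by_cases h : u x < v x
  · rw [if_pos (neg_lt_neg h), if_pos h]; exact e3
  · rw [if_neg (fun hc => h (by simpa using neg_lt_neg hc)), if_neg h]; exact e4

private lemma aux_D_eq_on_eq {u v : X → ℝ} (hu : u ∈ S.H) (hv : v ∈ S.H) :
    ∀ᵐ x ∂m, u x = v x → S.D u x = S.D v x := by
  have h1 := S.D4 hu hv
  have h2 := S.D4 hv hu
  have e : u ⊔ v = v ⊔ u := sup_comm u v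
  filter_upwards [h1, h2] with x a b hx
  rw [e] at a
  rw [hx, if_neg (lt_irrefl _)] at a
  rw [hx, if_neg (lt_irrefl _)] at b
  rw [← b]; exact a

private lemma aux_D_lattice {u v : X → ℝ} (hu : u ∈ S.H) (hv : v ∈ S.H) :
    ∀ᵐ x ∂m, (S.D (u ⊔ v) x) ^ 2 + (S.D (u ⊓ v) x) ^ 2 = (S.D u x) ^ 2 + (S.D v x) ^ 2 := by
  filter_upwards [S.D4 hu hv, aux_D_inf S hu hv, aux_D_eq_on_eq S hu hv] with x h1 h2 h3
  rcases lt_trichotomy (u x) (v x) with h | h | h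
  · rw [h1, h2, if_neg (asymm h), if_pos h]; ring
  · rw [h1, h2]; simp [h, h3 h]
  · rw [h1, h2, if_pos h, if_neg (asymm h)]

end Aux

section Aux2

variable {X : Type*} [MeasurableSpace X] {m : Measure X} (S : Setting X m)

private lemma aux_F_eq (u : X → ℝ) :
    F S 1 (fun _ => 1) u =
      (1 / 2) * ∫ x, (S.D u x) ^ 2 ∂m + (1 / 2) * ∫ x, (u x) ^ 2 ∂m - ∫ x, u x ∂m := by
  simp [F]

private lemma aux_intDsq_nonneg (u : X → ℝ) : 0 ≤ ∫ x, (S.D u x) ^ 2 ∂m :=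
  integral_nonneg fun x => sq_nonneg _

private lemma aux_intsq_nonneg (u : X → ℝ) : 0 ≤ ∫ x, (u x) ^ 2 ∂m :=
  integral_nonneg fun x => sq_nonneg _

variable [IsFiniteMeasure m]

private lemma aux_int_le {u : X → ℝ} (hu : u ∈ S.H) :
    ∫ x, u x ∂m ≤ (1 / 4) * ∫ x, (u x) ^ 2 ∂m + (m Set.univ).toReal := by
  have hint : Integrable (fun x => u x ^ 2 / 4 + 1) m :=
    ((aux_intsq S hu).div_const 4).add (integrable_const 1)
  have h := integral_mono (aux_int S hu) hint
    (fun x => (le_abs_self _).trans (aux_abs_le _))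
  rw [integral_add ((aux_intsq S hu).div_const 4) (integrable_const 1),
    integral_div, integral_const, smul_eq_mul, mul_one] at h
  change _ ≤ _ / 4 + (m Set.univ).toReal at h
  linarith

private lemma aux_coercive {u : X → ℝ} (hu : u ∈ S.H) :
    normHsq S u ≤ 4 * F S 1 (fun _ => 1) u + 4 * (m Set.univ).toReal := by
  have h1 := aux_int_le S hu
  have h2 := aux_intDsq_nonneg S u
  have h3 := aux_F_eq S u
  unfold normHsq
  linarith

private lemma aux_zero_H0 (Ω : Set X) : (fun _ => (0 : ℝ)) ∈ H0 S Ω :=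
  ⟨S.zero_mem, Eventually.of_forall fun _ _ => rfl⟩

private lemma aux_F_zero : F S 1 (fun _ => 1) (fun _ => (0 : ℝ)) = 0 := by
  have e1 : ∫ x, (S.D (fun _ => (0 : ℝ)) x) ^ 2 ∂m = 0 := by
    have e : (fun x => (S.D (fun _ => (0 : ℝ)) x) ^ 2) =ᵐ[m] (fun _ => (0 : ℝ)) := by
      filter_upwards [aux_D_zero S] with x hx
      rw [hx]; norm_num
    rw [integral_congr_ae e, integral_const]
    simp
  rw [aux_F_eq, e1]
  simp

private lemma aux_min_le_zero {Ω : Set X} {w : X → ℝ}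
    (hw : IsMinimizer S Ω 1 (fun _ => 1) w) : F S 1 (fun _ => 1) w ≤ 0 := by
  have := hw.2 _ (aux_zero_H0 S Ω)
  rwa [aux_F_zero] at this

private lemma aux_min_bound {Ω : Set X} {w : X → ℝ}
    (hw : IsMinimizer S Ω 1 (fun _ => 1) w) : normHsq S w ≤ 4 * (m Set.univ).toReal := by
  have h1 := aux_coercive S hw.1.1
  have h2 := aux_min_le_zero S hw
  linarith

private lemma aux_lattice_F {u v : X → ℝ} (hu : u ∈ S.H) (hv : v ∈ S.H) :
    F S 1 (fun _ => 1) (u ⊔ v) + F S 1 (fun _ => 1) (u ⊓ v)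
      = F S 1 (fun _ => 1) u + F S 1 (fun _ => 1) v := by
  have hsu := S.sup_mem hu hv
  have hiu := S.inf_mem hu hv
  have hD : ∫ x, (S.D (u ⊔ v) x) ^ 2 ∂m + ∫ x, (S.D (u ⊓ v) x) ^ 2 ∂m
      = ∫ x, (S.D u x) ^ 2 ∂m + ∫ x, (S.D v x) ^ 2 ∂m := by
    rw [← integral_add (aux_intD S hsu) (aux_intD S hiu),
      ← integral_add (aux_intD S hu) (aux_intD S hv)]
    exact integral_congr_ae (aux_D_lattice S hu hv)
  have hsq : ∫ x, ((u ⊔ v) x) ^ 2 ∂m + ∫ x, ((u ⊓ v) x) ^ 2 ∂m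
      = ∫ x, (u x) ^ 2 ∂m + ∫ x, (v x) ^ 2 ∂m := by
    rw [← integral_add (aux_intsq S hsu) (aux_intsq S hiu),
      ← integral_add (aux_intsq S hu) (aux_intsq S hv)]
    apply integral_congr_ae (Eventually.of_forall fun x => ?_)
    simp only [Pi.sup_apply, Pi.inf_apply]
    rcases le_total (u x) (v x) with h | h
    · rw [sup_eq_right.2 h, inf_eq_left.2 h]; ring
    · rw [sup_eq_left.2 h, inf_eq_right.2 h]
  have hlin : ∫ x, (u ⊔ v) x ∂m + ∫ x, (u ⊓ v) x ∂m = ∫ x, u x ∂m + ∫ x, v x ∂m := by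
    rw [← integral_add (aux_int S hsu) (aux_int S hiu),
      ← integral_add (aux_int S hu) (aux_int S hv)]
    apply integral_congr_ae (Eventually.of_forall fun x => ?_)
    simp only [Pi.sup_apply, Pi.inf_apply]
    rcases le_total (u x) (v x) with h | h
    · rw [sup_eq_right.2 h, inf_eq_left.2 h]; ring
    · rw [sup_eq_left.2 h, inf_eq_right.2 h]
  rw [aux_F_eq, aux_F_eq, aux_F_eq, aux_F_eq]
  linarith

private lemma aux_min_nonneg {Ω : Set X} {w : X → ℝ}
    (hw : IsMinimizer S Ω 1 (fun _ => 1) w) : ∀ᵐ x ∂m, 0 ≤ w x := by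
  have hwH := hw.1.1
  have hzH := S.zero_mem
  have hsH := S.sup_mem hwH hzH
  have hmem : w ⊔ (fun _ => (0 : ℝ)) ∈ H0 S Ω := by
    refine ⟨hsH, ?_⟩
    filter_upwards [hw.1.2] with x hx hxΩ
    simp only [Pi.sup_apply]
    rw [hx hxΩ]
    simp
  have hA : ∫ x, (S.D (w ⊔ (fun _ => (0 : ℝ))) x) ^ 2 ∂m ≤ ∫ x, (S.D w x) ^ 2 ∂m := by
    apply integral_mono_ae (aux_intD S hsH) (aux_intD S hwH)
    filter_upwards [S.D4 hwH hzH, aux_D_zero S, S.D1 hwH] with x h1 h2 h3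
    rw [h1]
    split_ifs with h
    · exact le_refl _
    · rw [h2]; simpa using sq_nonneg (S.D w x)
  have hB : ∫ x, ((w ⊔ (fun _ => (0 : ℝ))) x) ^ 2 ∂m ≤ ∫ x, (w x) ^ 2 ∂m := by
    apply integral_mono (aux_intsq S hsH) (aux_intsq S hwH)
    intro x
    simp only [Pi.sup_apply]
    rcases le_total (w x) 0 with h | h
    · rw [sup_eq_right.2 h]; simpa using sq_nonneg (w x)
    · rw [sup_eq_left.2 h]
  have hC : ∫ x, w x ∂m ≤ ∫ x, (w ⊔ (fun _ => (0 : ℝ))) x ∂m := by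
    apply integral_mono (aux_int S hwH) (aux_int S hsH)
    intro x
    exact le_sup_left
  have hF := hw.2 _ hmem
  rw [aux_F_eq, aux_F_eq] at hF
  have hBeq : ∫ x, ((w ⊔ (fun _ => (0 : ℝ))) x) ^ 2 ∂m = ∫ x, (w x) ^ 2 ∂m :=
    le_antisymm hB (by linarith)
  have hzero : ∫ x, ((w x) ^ 2 - ((w ⊔ (fun _ => (0 : ℝ))) x) ^ 2) ∂m = 0 := by
    rw [integral_sub (aux_intsq S hwH) (aux_intsq S hsH), hBeq]
    ring
  have hnn : ∀ᵐ x ∂m, 0 ≤ (w x) ^ 2 - ((w ⊔ (fun _ => (0 : ℝ))) x) ^ 2 := by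
    apply Eventually.of_forall
    intro x
    simp only [Pi.sup_apply]
    rcases le_total (w x) 0 with h | h
    · rw [sup_eq_right.2 h]; simpa using sq_nonneg (w x)
    · rw [sup_eq_left.2 h]; simp
  have hae := (integral_eq_zero_iff_of_nonneg_ae hnn
    ((aux_intsq S hwH).sub (aux_intsq S hsH))).1 hzero
  filter_upwards [hae] with x hx
  by_contra h
  push_neg at h
  have hx' : w x ^ 2 = 0 := by
    have e : (w ⊔ (fun _ => (0 : ℝ))) x = 0 := by
      simp only [Pi.sup_apply]
      exact sup_eq_right.2 h.le
    simpa [e] using hx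
  exact absurd ((pow_eq_zero_iff two_ne_zero).1 hx') h.ne

private lemma aux_supersol {Ω : Set X} {w : X → ℝ} (hw : IsMinimizer S Ω 1 (fun _ => 1) w)
    {v : X → ℝ} (hv : v ∈ S.H) (hv0 : ∀ᵐ x ∂m, 0 ≤ v x) :
    F S 1 (fun _ => 1) (w ⊔ v) ≤ F S 1 (fun _ => 1) v := by
  have hmem : w ⊓ v ∈ H0 S Ω := by
    refine ⟨S.inf_mem hw.1.1 hv, ?_⟩
    filter_upwards [hw.1.2, hv0] with x h1 h2 hxΩ
    simp only [Pi.inf_apply]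
    rw [h1 hxΩ]
    exact inf_eq_left.2 h2
  have h1 := hw.2 _ hmem
  have h2 := aux_lattice_F S hw.1.1 hv
  linarith

private lemma aux_normHsq_sup_le {u v : X → ℝ} (hu : u ∈ S.H) (hv : v ∈ S.H) :
    normHsq S (u ⊔ v) ≤ normHsq S u + normHsq S v := by
  have hs := S.sup_mem hu hv
  have h1 : ∫ x, (S.D (u ⊔ v) x) ^ 2 ∂m ≤ ∫ x, ((S.D u x) ^ 2 + (S.D v x) ^ 2) ∂m := by
    have hint : Integrable (fun x => (S.D u x) ^ 2 + (S.D v x) ^ 2) m :=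
      (aux_intD S hu).add (aux_intD S hv)
    apply integral_mono_ae (aux_intD S hs) hint
    filter_upwards [S.D4 hu hv] with x h
    rw [h]
    split_ifs <;> nlinarith [sq_nonneg (S.D u x), sq_nonneg (S.D v x)]
  have h2 : ∫ x, ((u ⊔ v) x) ^ 2 ∂m ≤ ∫ x, ((u x) ^ 2 + (v x) ^ 2) ∂m := by
    have hint : Integrable (fun x => (u x) ^ 2 + (v x) ^ 2) m :=
      (aux_intsq S hu).add (aux_intsq S hv)
    apply integral_mono (aux_intsq S hs) hint
    intro x
    simp only [Pi.sup_apply]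
    rcases le_total (u x) (v x) with h | h
    · rw [sup_eq_right.2 h]; nlinarith [sq_nonneg (u x)]
    · rw [sup_eq_left.2 h]; nlinarith [sq_nonneg (v x)]
  rw [integral_add (aux_intD S hu) (aux_intD S hv)] at h1
  rw [integral_add (aux_intsq S hu) (aux_intsq S hv)] at h2
  unfold normHsq
  linarith

private lemma aux_midpoint {z₁ z₂ : X → ℝ} (h1 : z₁ ∈ S.H) (h2 : z₂ ∈ S.H) :
    F S 1 (fun _ => 1) ((1 / 2 : ℝ) • (z₁ + z₂))
      ≤ (1 / 2) * F S 1 (fun _ => 1) z₁ + (1 / 2) * F S 1 (fun _ => 1) z₂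
        - (1 / 8) * ∫ x, (z₁ x - z₂ x) ^ 2 ∂m := by
  have haddH := S.add_mem h1 h2
  have hmH := S.smul_mem (1 / 2 : ℝ) haddH
  have idiff : Integrable (fun x => (z₁ x - z₂ x) ^ 2) m :=
    ((S.memL2 h1).sub (S.memL2 h2)).integrable_sq
  have hD : ∫ x, (S.D ((1 / 2 : ℝ) • (z₁ + z₂)) x) ^ 2 ∂m
      ≤ ∫ x, ((1 / 2) * (S.D z₁ x) ^ 2 + (1 / 2) * (S.D z₂ x) ^ 2) ∂m := by
    have j1 : Integrable (fun x => (1 / 2) * (S.D z₁ x) ^ 2) m := (aux_intD S h1).const_mul _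
    have j2 : Integrable (fun x => (1 / 2) * (S.D z₂ x) ^ 2) m := (aux_intD S h2).const_mul _
    have hint : Integrable (fun x => (1 / 2) * (S.D z₁ x) ^ 2 + (1 / 2) * (S.D z₂ x) ^ 2) m :=
      j1.add j2
    apply integral_mono_ae (aux_intD S hmH) hint
    filter_upwards [S.D3 (1 / 2 : ℝ) haddH, S.D2 h1 h2, S.D1 h1, S.D1 h2, S.D1 haddH]
      with x e1 e2 e3 e4 e5
    rw [e1, show |(1 / 2 : ℝ)| = 1 / 2 by norm_num]
    have hS2 : (S.D (z₁ + z₂) x) ^ 2 ≤ (S.D z₁ x + S.D z₂ x) ^ 2 := by nlinarith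
    nlinarith [sq_nonneg (S.D z₁ x - S.D z₂ x)]
  have j1 : Integrable (fun x => (1 / 2) * (S.D z₁ x) ^ 2) m := (aux_intD S h1).const_mul _
  have j2 : Integrable (fun x => (1 / 2) * (S.D z₂ x) ^ 2) m := (aux_intD S h2).const_mul _
  rw [integral_add j1 j2, integral_const_mul, integral_const_mul] at hD
  have hsq : ∫ x, (((1 / 2 : ℝ) • (z₁ + z₂)) x) ^ 2 ∂m
      = (1 / 2) * ∫ x, (z₁ x) ^ 2 ∂m + ((1 / 2) * ∫ x, (z₂ x) ^ 2 ∂m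
        - (1 / 4) * ∫ x, (z₁ x - z₂ x) ^ 2 ∂m) := by
    have e : ∀ x, (((1 / 2 : ℝ) • (z₁ + z₂)) x) ^ 2
        = (1 / 2) * (z₁ x) ^ 2 + ((1 / 2) * (z₂ x) ^ 2 - (1 / 4) * (z₁ x - z₂ x) ^ 2) := by
      intro x
      simp only [Pi.smul_apply, Pi.add_apply, smul_eq_mul]
      ring
    simp only [e]
    have i1 : Integrable (fun x => (1 / 2) * (z₁ x) ^ 2) m := (aux_intsq S h1).const_mul _
    have i2 : Integrable (fun x => (1 / 2) * (z₂ x) ^ 2) m := (aux_intsq S h2).const_mul _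
    have i3 : Integrable (fun x => (1 / 4) * (z₁ x - z₂ x) ^ 2) m := idiff.const_mul _
    have i23 : Integrable (fun x => (1 / 2) * (z₂ x) ^ 2 - (1 / 4) * (z₁ x - z₂ x) ^ 2) m :=
      i2.sub i3
    rw [integral_add i1 i23, integral_sub i2 i3,
      integral_const_mul, integral_const_mul, integral_const_mul]
  have hlin : ∫ x, ((1 / 2 : ℝ) • (z₁ + z₂)) x ∂m
      = (1 / 2) * ∫ x, z₁ x ∂m + (1 / 2) * ∫ x, z₂ x ∂m := by
    have e : ∀ x, ((1 / 2 : ℝ) • (z₁ + z₂)) x = (1 / 2) * z₁ x + (1 / 2) * z₂ x := by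
      intro x
      simp only [Pi.smul_apply, Pi.add_apply, smul_eq_mul]
      ring
    simp only [e]
    have i1 : Integrable (fun x => (1 / 2) * z₁ x) m := (aux_int S h1).const_mul _
    have i2 : Integrable (fun x => (1 / 2) * z₂ x) m := (aux_int S h2).const_mul _
    rw [integral_add i1 i2, integral_const_mul, integral_const_mul]
  rw [aux_F_eq, aux_F_eq, aux_F_eq]
  linarith

end Aux2

section Aux3

variable {X : Type*} [MeasurableSpace X] {m : Measure X}

private lemma aux_young {δ : ℝ} (hδ : 0 < δ) (a b : ℝ) :
    |a * b| ≤ δ * b ^ 2 + 1 / (4 * δ) * a ^ 2 := by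
  have h4 : (0 : ℝ) < 4 * δ := by positivity
  have e : 4 * δ * (δ * b ^ 2 + 1 / (4 * δ) * a ^ 2) = 4 * δ ^ 2 * b ^ 2 + a ^ 2 := by
    field_simp
  have key : 4 * δ * |a * b| ≤ 4 * δ ^ 2 * b ^ 2 + a ^ 2 := by
    rw [abs_mul]
    nlinarith [sq_nonneg (2 * δ * |b| - |a|), sq_abs a, sq_abs b, abs_nonneg a, abs_nonneg b]
  exact le_of_mul_le_mul_left (by rw [e]; exact key) h4

private lemma aux_cross {e : ℕ → X → ℝ} {h : X → ℝ} (he : ∀ k, MemLp (e k) 2 m)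
    (hh : MemLp h 2 m)
    (hc : Tendsto (fun k => ∫ x, (e k x) ^ 2 ∂m) atTop (nhds 0)) :
    Tendsto (fun k => ∫ x, e k x * h x ∂m) atTop (nhds 0) := by
  rw [Metric.tendsto_atTop]
  intro ε hε
  set B := ∫ x, (h x) ^ 2 ∂m with hB
  have hB0 : 0 ≤ B := integral_nonneg fun x => sq_nonneg _
  set δ : ℝ := ε / (2 * (B + 1)) with hδ
  have hδ0 : 0 < δ := by positivity
  have hη0 : (0 : ℝ) < 2 * δ * ε := by positivity
  obtain ⟨N, hN⟩ := (Metric.tendsto_atTop.1 hc) (2 * δ * ε) hη0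
  refine ⟨N, fun k hk => ?_⟩
  have hek2 : 0 ≤ ∫ x, (e k x) ^ 2 ∂m := integral_nonneg fun x => sq_nonneg _
  have hlt : ∫ x, (e k x) ^ 2 ∂m < 2 * δ * ε := by
    have := hN k hk
    rw [Real.dist_eq, sub_zero, abs_of_nonneg hek2] at this
    exact this
  have hint1 : Integrable (fun x => e k x * h x) m := aux_int_mul (he k) hh
  have hint2 : Integrable (fun x => δ * (h x) ^ 2 + (1 / (4 * δ)) * (e k x) ^ 2) m :=
    (hh.integrable_sq.const_mul _).add ((he k).integrable_sq.const_mul _)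
  have hptw : ∀ x, |e k x * h x| ≤ δ * (h x) ^ 2 + (1 / (4 * δ)) * (e k x) ^ 2 :=
    fun x => aux_young hδ0 (e k x) (h x)
  have habs : |∫ x, e k x * h x ∂m| ≤ δ * B + (1 / (4 * δ)) * ∫ x, (e k x) ^ 2 ∂m := by
    calc |∫ x, e k x * h x ∂m| ≤ ∫ x, |e k x * h x| ∂m := by
          have hn := norm_integral_le_integral_norm (μ := m) (fun x => e k x * h x)
          simpa only [Real.norm_eq_abs] using hn
      _ ≤ ∫ x, (δ * (h x) ^ 2 + (1 / (4 * δ)) * (e k x) ^ 2) ∂m :=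
          integral_mono hint1.abs hint2 hptw
      _ = δ * B + (1 / (4 * δ)) * ∫ x, (e k x) ^ 2 ∂m := by
          rw [integral_add (hh.integrable_sq.const_mul _) ((he k).integrable_sq.const_mul _),
            integral_const_mul, integral_const_mul]
  rw [Real.dist_eq, sub_zero]
  have hδB : δ * B < ε / 2 := by
    rw [hδ]
    rw [div_mul_eq_mul_div, div_lt_div_iff₀ (by positivity) (by norm_num : (0:ℝ) < 2)]
    nlinarith
  have h2nd : (1 / (4 * δ)) * ∫ x, (e k x) ^ 2 ∂m < ε / 2 := by
    rw [div_mul_eq_mul_div, one_mul, div_lt_iff₀ (by positivity : (0:ℝ) < 4 * δ)] at *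
    nlinarith
  linarith [habs]

private lemma aux_conv_mul {f : ℕ → X → ℝ} {g h : X → ℝ} (hf : ∀ k, MemLp (f k) 2 m)
    (hg : MemLp g 2 m) (hh : MemLp h 2 m)
    (hconv : Tendsto (fun k => ∫ x, (f k x - g x) ^ 2 ∂m) atTop (nhds 0)) :
    Tendsto (fun k => ∫ x, f k x * h x ∂m) atTop (nhds (∫ x, g x * h x ∂m)) := by
  have he : ∀ k, MemLp (fun x => f k x - g x) 2 m := fun k => (hf k).sub hg
  have hcross := aux_cross he hh hconv
  have hrw : (fun k => ∫ x, f k x * h x ∂m)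
      = fun k => (∫ x, (f k x - g x) * h x ∂m) + ∫ x, g x * h x ∂m := by
    funext k
    rw [← integral_add (aux_int_mul (he k) hh) (aux_int_mul hg hh)]
    apply integral_congr_ae (Eventually.of_forall fun x => ?_)
    ring
  rw [hrw]
  simpa using hcross.add (tendsto_const_nhds (x := ∫ x, g x * h x ∂m))

private lemma aux_conv_int [IsFiniteMeasure m] {f : ℕ → X → ℝ} {g : X → ℝ}
    (hf : ∀ k, MemLp (f k) 2 m) (hg : MemLp g 2 m)
    (hconv : Tendsto (fun k => ∫ x, (f k x - g x) ^ 2 ∂m) atTop (nhds 0)) :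
    Tendsto (fun k => ∫ x, f k x ∂m) atTop (nhds (∫ x, g x ∂m)) := by
  have := aux_conv_mul hf hg (memLp_const (1 : ℝ)) hconv
  simpa using this

private lemma aux_conv_sq {f : ℕ → X → ℝ} {g : X → ℝ}
    (hf : ∀ k, MemLp (f k) 2 m) (hg : MemLp g 2 m)
    (hconv : Tendsto (fun k => ∫ x, (f k x - g x) ^ 2 ∂m) atTop (nhds 0)) :
    Tendsto (fun k => ∫ x, (f k x) ^ 2 ∂m) atTop (nhds (∫ x, (g x) ^ 2 ∂m)) := by
  have he : ∀ k, MemLp (fun x => f k x - g x) 2 m := fun k => (hf k).sub hg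
  have hcross := aux_cross he hg hconv
  have hrw : (fun k => ∫ x, (f k x) ^ 2 ∂m)
      = fun k => (∫ x, (f k x - g x) ^ 2 ∂m)
          + (2 * (∫ x, (f k x - g x) * g x ∂m) + ∫ x, (g x) ^ 2 ∂m) := by
    funext k
    have i1 : Integrable (fun x => (f k x - g x) ^ 2) m := (he k).integrable_sq
    have i2 : Integrable (fun x => 2 * ((f k x - g x) * g x)) m :=
      (aux_int_mul (he k) hg).const_mul 2
    have i3 : Integrable (fun x => (g x) ^ 2) m := hg.integrable_sq
    have i23 : Integrable (fun x => 2 * ((f k x - g x) * g x) + (g x) ^ 2) m := i2.add i3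
    rw [show (2 : ℝ) * (∫ x, (f k x - g x) * g x ∂m) = ∫ x, 2 * ((f k x - g x) * g x) ∂m
        from (integral_const_mul 2 _).symm,
      ← integral_add i2 i3, ← integral_add i1 i23]
    apply integral_congr_ae (Eventually.of_forall fun x => ?_)
    ring
  rw [hrw]
  have : Tendsto (fun k => (∫ x, (f k x - g x) ^ 2 ∂m)
      + (2 * (∫ x, (f k x - g x) * g x ∂m) + ∫ x, (g x) ^ 2 ∂m)) atTop
      (nhds (0 + (2 * 0 + ∫ x, (g x) ^ 2 ∂m))) :=
    hconv.add ((hcross.const_mul 2).add tendsto_const_nhds)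
  simpa using this

private lemma aux_nonneg_ae_zero {h : X → ℝ} (hint : Integrable h m)
    (hpos : 0 ≤ᵐ[m] h) {t : ℕ → ℝ} (ht : Tendsto t atTop (nhds 0))
    (hle : ∀ k, ∫ x, h x ∂m ≤ t k) : h =ᵐ[m] 0 := by
  have h1 : ∫ x, h x ∂m ≤ 0 := ge_of_tendsto' ht hle
  have h2 : 0 ≤ ∫ x, h x ∂m := integral_nonneg_of_ae hpos
  exact (integral_eq_zero_iff_of_nonneg_ae hpos hint).1 (le_antisymm h1 h2)

private lemma aux_liminf_le {s r : ℕ → ℝ} {L : ℝ} (h0 : ∀ k, 0 ≤ s k)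
    (hsr : ∀ k, s k ≤ r k) (hr : Tendsto r atTop (nhds L)) :
    liminf s atTop ≤ L := by
  have hbs : IsBoundedUnder (· ≥ ·) atTop s := ⟨0, eventually_map.mpr (Eventually.of_forall h0)⟩
  have hbr : IsCoboundedUnder (· ≥ ·) atTop r :=
    (hr.isBoundedUnder_le).isCoboundedUnder_ge
  have h := liminf_le_liminf (Eventually.of_forall hsr) hbs hbr
  rwa [hr.liminf_eq] at h

end Aux3

section Aux4

variable {X : Type*} [MeasurableSpace X] {m : Measure X} (S : Setting X m) [IsFiniteMeasure m]

/-- LSC of the functional along `L²`-convergent `H`-bounded sequences, with varying bounds. -/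
private lemma aux_limF (hlsc : GradLSC S)
    {f : ℕ → X → ℝ} {g : X → ℝ} (hf : ∀ k, f k ∈ S.H)
    (hbd : ∃ C, ∀ k, normHsq S (f k) ≤ C)
    (hconv : Tendsto (fun k => ∫ x, (f k x - g x) ^ 2 ∂m) atTop (nhds 0))
    {c : ℕ → ℝ} {L : ℝ} (hc : ∀ k, F S 1 (fun _ => 1) (f k) ≤ c k)
    (hcl : Tendsto c atTop (nhds L)) :
    g ∈ S.H ∧ F S 1 (fun _ => 1) g ≤ L := by
  obtain ⟨hg, hlim⟩ := hlsc f g hf hbd hconv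
  refine ⟨hg, ?_⟩
  have hfk2 : ∀ k, MemLp (f k) 2 m := fun k => S.memL2 (hf k)
  have hg2 := S.memL2 hg
  have h1 := aux_conv_int hfk2 hg2 hconv
  have h2 := aux_conv_sq hfk2 hg2 hconv
  have hs0 : ∀ k, 0 ≤ ∫ x, (S.D (f k) x) ^ 2 ∂m := fun k => aux_intDsq_nonneg S _
  have hsr : ∀ k, ∫ x, (S.D (f k) x) ^ 2 ∂m
      ≤ 2 * c k - ∫ x, (f k x) ^ 2 ∂m + 2 * ∫ x, f k x ∂m := by
    intro k
    have := hc k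
    rw [aux_F_eq] at this
    linarith
  have hr : Tendsto (fun k => 2 * c k - ∫ x, (f k x) ^ 2 ∂m + 2 * ∫ x, f k x ∂m) atTop
      (nhds (2 * L - ∫ x, (g x) ^ 2 ∂m + 2 * ∫ x, g x ∂m)) :=
    ((hcl.const_mul 2).sub h2).add (h1.const_mul 2)
  have hll := aux_liminf_le hs0 hsr hr
  have hDg := hlim.trans hll
  rw [aux_F_eq]
  linarith

end Aux4

section Aux5

variable {X : Type*} [MeasurableSpace X] {m : Measure X} (S : Setting X m) [IsFiniteMeasure m]

private lemma aux_normHsq_nonneg (u : X → ℝ) : 0 ≤ normHsq S u := by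
  have h1 := aux_intsq_nonneg (m := m) u
  have h2 := aux_intDsq_nonneg S u
  unfold normHsq
  linarith

private lemma aux_exists_min (hcpt : CompactEmbedding S) (hlsc : GradLSC S)
    {Ω : Set X} (hΩm : MeasurableSet Ω) :
    ∃ w', IsMinimizer S Ω 1 (fun _ => 1) w' := by
  set A := (F S 1 (fun _ => 1)) '' (H0 S Ω) with hA
  have hne : A.Nonempty := ⟨_, ⟨_, aux_zero_H0 S Ω, rfl⟩⟩
  have hlb : ∀ a ∈ A, -(4 * (m Set.univ).toReal) ≤ a := by
    rintro a ⟨u, hu, rfl⟩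
    have h1 := aux_coercive S hu.1
    have h2 := aux_normHsq_nonneg S u
    have h3 : (0 : ℝ) ≤ (m Set.univ).toReal := ENNReal.toReal_nonneg
    linarith
  have hbdd : BddBelow A := ⟨_, hlb⟩
  set I := sInf A with hI
  have hsel : ∀ k : ℕ, ∃ u, u ∈ H0 S Ω ∧ F S 1 (fun _ => 1) u < I + 1 / ((k : ℝ) + 1) := by
    intro k
    have hlt : I < I + 1 / ((k : ℝ) + 1) := by
      have : (0 : ℝ) < 1 / ((k : ℝ) + 1) := by positivity
      linarith
    obtain ⟨a, ⟨u, hu, rfl⟩, ha⟩ := exists_lt_of_csInf_lt hne hlt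
    exact ⟨u, hu, ha⟩
  choose u huH0 huF using hsel
  have hbd : ∀ k, normHsq S (u k) ≤ 4 * (I + 1) + 4 * (m Set.univ).toReal := by
    intro k
    have h1 := aux_coercive S (huH0 k).1
    have h3 : 1 / ((k : ℝ) + 1) ≤ 1 := by
      rw [div_le_one (by positivity)]
      linarith [Nat.cast_nonneg (α := ℝ) k]
    have h2 : F S 1 (fun _ => 1) (u k) ≤ I + 1 := by
      have := huF k
      linarith
    linarith
  obtain ⟨ψ, v', hψ, hv'H, hconv⟩ := hcpt u (fun k => (huH0 k).1) ⟨_, hbd⟩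
  have hcl : Tendsto (fun k => I + 1 / ((ψ k : ℝ) + 1)) atTop (nhds I) := by
    have h0 : Tendsto (fun k : ℕ => 1 / ((ψ k : ℝ) + 1)) atTop (nhds 0) := by
      apply tendsto_of_tendsto_of_tendsto_of_le_of_le tendsto_const_nhds
        tendsto_one_div_add_atTop_nhds_zero_nat
      · intro k
        positivity
      · intro k
        have hk : (k : ℝ) ≤ (ψ k : ℝ) := by exact_mod_cast hψ.le_apply
        exact one_div_le_one_div_of_le (by positivity) (by linarith)
    simpa using (tendsto_const_nhds (x := I)).add h0
  have hFle : ∀ k, F S 1 (fun _ => 1) (u (ψ k)) ≤ I + 1 / ((ψ k : ℝ) + 1) :=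
    fun k => (huF (ψ k)).le
  obtain ⟨hv'H', hFv'⟩ := aux_limF S hlsc (fun k => (huH0 (ψ k)).1)
    ⟨_, fun k => hbd (ψ k)⟩ hconv hFle hcl
  have hvan : ∀ᵐ x ∂m, x ∉ Ω → v' x = 0 := by
    have hind : Integrable (Set.indicator Ωᶜ (fun x => (v' x) ^ 2)) m :=
      ((S.memL2 hv'H).integrable_sq).indicator hΩm.compl
    have hpos : 0 ≤ᵐ[m] Set.indicator Ωᶜ (fun x => (v' x) ^ 2) :=
      Eventually.of_forall fun x => Set.indicator_nonneg (fun y _ => sq_nonneg _) x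
    have hle : ∀ k, ∫ x, Set.indicator Ωᶜ (fun x => (v' x) ^ 2) x ∂m
        ≤ ∫ x, (u (ψ k) x - v' x) ^ 2 ∂m := by
      intro k
      have hint2 : Integrable (fun x => (u (ψ k) x - v' x) ^ 2) m :=
        ((S.memL2 (huH0 (ψ k)).1).sub (S.memL2 hv'H)).integrable_sq
      apply integral_mono_ae hind hint2
      filter_upwards [(huH0 (ψ k)).2] with x hx
      by_cases hxΩ : x ∈ Ω
      · rw [Set.indicator_of_notMem (by simpa using hxΩ)]
        exact sq_nonneg _
      · rw [Set.indicator_of_mem (by simpa using hxΩ), hx hxΩ, zero_sub, neg_sq]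
    have hzero := aux_nonneg_ae_zero hind hpos hconv hle
    filter_upwards [hzero] with x hx hxΩ
    have hx' : Set.indicator Ωᶜ (fun x => (v' x) ^ 2) x = 0 := by simpa using hx
    rw [Set.indicator_of_mem (by simpa using hxΩ)] at hx'
    exact (pow_eq_zero_iff two_ne_zero).1 hx'
  refine ⟨v', ⟨hv'H', hvan⟩, fun u' hu' => ?_⟩
  exact hFv'.trans (csInf_le hbdd ⟨u', hu', rfl⟩)

end Aux5

/-- compactness of the weak-γ-convergence: every sequence of energy
sets has a subsequence whose torsion functions converge strongly in `L²` to some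
`w ∈ H`, and the limit set `{w > 0}` is an energy set. -/
theorem statement_14 {X : Type*} [MeasurableSpace X] {m : Measure X} [IsFiniteMeasure m]
    (S : Setting X m) (hcpt : CompactEmbedding S) (hlsc : GradLSC S)
    (Ω : ℕ → Set X) (hΩ : ∀ n, MeasurableSet (Ω n))
    (wn : ℕ → X → ℝ) (hwn : ∀ n, IsMinimizer S (Ω n) 1 (fun _ => 1) (wn n))
    (hEn : ∀ n, m (Ω n \ {x | 0 < wn n x}) = 0) :
    ∃ (φ : ℕ → ℕ) (w : X → ℝ), StrictMono φ ∧ w ∈ S.H ∧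
      Tendsto (fun k => ∫ x, (wn (φ k) x - w x) ^ 2 ∂m) atTop (nhds 0) ∧
      IsEnergySet S {x | 0 < w x} := by
  have hbd0 : ∀ n, normHsq S (wn n) ≤ 4 * (m Set.univ).toReal :=
    fun n => aux_min_bound S (hwn n)
  obtain ⟨φ, v, hφ, hvH, hconv⟩ := hcpt wn (fun n => (hwn n).1.1) ⟨_, hbd0⟩
  have hwn0 : ∀ n, ∀ᵐ x ∂m, 0 ≤ wn n x := fun n => aux_min_nonneg S (hwn n)
  -- the weak limit is nonnegative a.e.
  have hv0 : ∀ᵐ x ∂m, 0 ≤ v x := by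
    have hinfH : v ⊓ (fun _ => (0 : ℝ)) ∈ S.H := S.inf_mem hvH S.zero_mem
    have hind : Integrable (fun x => ((v ⊓ fun _ => (0 : ℝ)) x) ^ 2) m := aux_intsq S hinfH
    have hpos : 0 ≤ᵐ[m] fun x => ((v ⊓ fun _ => (0 : ℝ)) x) ^ 2 :=
      Eventually.of_forall fun x => sq_nonneg _
    have hle : ∀ k, ∫ x, ((v ⊓ fun _ => (0 : ℝ)) x) ^ 2 ∂m
        ≤ ∫ x, (wn (φ k) x - v x) ^ 2 ∂m := by
      intro k
      have hint2 : Integrable (fun x => (wn (φ k) x - v x) ^ 2) m :=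
        ((S.memL2 (hwn (φ k)).1.1).sub (S.memL2 hvH)).integrable_sq
      apply integral_mono_ae hind hint2
      filter_upwards [hwn0 (φ k)] with x hx
      simp only [Pi.inf_apply]
      rcases le_total (v x) 0 with h | h
      · rw [inf_eq_left.2 h]
        nlinarith
      · rw [inf_eq_right.2 h]
        simpa using sq_nonneg (wn (φ k) x - v x)
    have hzero := aux_nonneg_ae_zero hind hpos hconv hle
    filter_upwards [hzero] with x hx
    have hx' : ((v ⊓ fun _ => (0 : ℝ)) x) ^ 2 = 0 := by simpa using hx
    have hinf0 := (pow_eq_zero_iff two_ne_zero).1 hx'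
    simp only [Pi.inf_apply] at hinf0
    by_contra hneg
    push_neg at hneg
    rw [inf_eq_left.2 hneg.le] at hinf0
    exact hneg.ne hinf0
  -- a measurable nonnegative representative of the limit
  have hvm := (S.memL2 hvH).aestronglyMeasurable
  set w : X → ℝ := fun x => max (hvm.mk v x) 0 with hwdef
  have hwmeas : Measurable w := (hvm.stronglyMeasurable_mk.measurable).max measurable_const
  have hwv : w =ᵐ[m] v := by
    filter_upwards [hvm.ae_eq_mk, hv0] with x h1 h2
    show max (hvm.mk v x) 0 = v x
    rw [← h1]
    exact max_eq_left h2
  have hw0 : ∀ x, 0 ≤ w x := fun x => le_max_right _ _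
  have hconvw : Tendsto (fun k => ∫ x, (wn (φ k) x - w x) ^ 2 ∂m) atTop (nhds 0) := by
    have e : (fun k => ∫ x, (wn (φ k) x - w x) ^ 2 ∂m)
        = fun k => ∫ x, (wn (φ k) x - v x) ^ 2 ∂m := by
      funext k
      apply integral_congr_ae
      filter_upwards [hwv] with x hx
      rw [hx]
    rw [e]
    exact hconv
  have hwH : w ∈ S.H :=
    (hlsc (fun k => wn (φ k)) w (fun k => (hwn (φ k)).1.1) ⟨_, fun k => hbd0 (φ k)⟩ hconvw).1
  have hΩmeas : MeasurableSet {x | 0 < w x} := measurableSet_lt measurable_const hwmeas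
  -- the torsion minimizer of the limit set
  obtain ⟨w', hw'⟩ := aux_exists_min S hcpt hlsc hΩmeas
  have hw'0 := aux_min_nonneg S hw'
  -- pass the supersolution property to the limit : F (w ⊔ w') ≤ F w'
  have hFk : ∀ k, F S 1 (fun _ => 1) (wn (φ k) ⊔ w') ≤ F S 1 (fun _ => 1) w' :=
    fun k => aux_supersol S (hwn (φ k)) hw'.1.1 hw'0
  have hsupH : ∀ k, wn (φ k) ⊔ w' ∈ S.H := fun k => S.sup_mem (hwn (φ k)).1.1 hw'.1.1
  have hsupbd : ∀ k, normHsq S (wn (φ k) ⊔ w')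
      ≤ 4 * (m Set.univ).toReal + normHsq S w' :=
    fun k => (aux_normHsq_sup_le S (hwn (φ k)).1.1 hw'.1.1).trans (by linarith [hbd0 (φ k)])
  have hconvsup : Tendsto (fun k => ∫ x, ((wn (φ k) ⊔ w') x - (w ⊔ w') x) ^ 2 ∂m) atTop
      (nhds 0) := by
    apply tendsto_of_tendsto_of_tendsto_of_le_of_le tendsto_const_nhds hconvw
    · intro k
      exact integral_nonneg fun x => sq_nonneg _
    · intro k
      have hint1 : Integrable (fun x => ((wn (φ k) ⊔ w') x - (w ⊔ w') x) ^ 2) m :=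
        ((S.memL2 (hsupH k)).sub (S.memL2 (S.sup_mem hwH hw'.1.1))).integrable_sq
      have hint2 : Integrable (fun x => (wn (φ k) x - w x) ^ 2) m :=
        ((S.memL2 (hwn (φ k)).1.1).sub (S.memL2 hwH)).integrable_sq
      apply integral_mono hint1 hint2
      intro x
      simp only [Pi.sup_apply]
      have habs : |wn (φ k) x ⊔ w' x - (w x ⊔ w' x)| ≤ |wn (φ k) x - w x| := by
        simpa using abs_max_sub_max_le_abs (wn (φ k) x) (w x) (w' x)
      calc (wn (φ k) x ⊔ w' x - (w x ⊔ w' x)) ^ 2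
          = |wn (φ k) x ⊔ w' x - (w x ⊔ w' x)| ^ 2 := (sq_abs _).symm
        _ ≤ |wn (φ k) x - w x| ^ 2 := pow_le_pow_left₀ (abs_nonneg _) habs 2
        _ = (wn (φ k) x - w x) ^ 2 := sq_abs _
  obtain ⟨hswH, hFsup⟩ := aux_limF S hlsc hsupH ⟨_, hsupbd⟩ hconvsup
    (c := fun _ => F S 1 (fun _ => 1) w') hFk tendsto_const_nhds
  -- minimality and strict convexity force w ≤ w' a.e.
  have hsupH0 : w ⊔ w' ∈ H0 S {x | 0 < w x} := by
    refine ⟨S.sup_mem hwH hw'.1.1, ?_⟩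
    filter_upwards [hw'.1.2] with x hx hxΩ
    have e1 : w' x = 0 := hx hxΩ
    have e2 : w x = 0 := le_antisymm (not_lt.1 hxΩ) (hw0 x)
    simp [Pi.sup_apply, e1, e2]
  have hmin1 : F S 1 (fun _ => 1) w' ≤ F S 1 (fun _ => 1) (w ⊔ w') := hw'.2 _ hsupH0
  have hzH0 : (1 / 2 : ℝ) • (w' + (w ⊔ w')) ∈ H0 S {x | 0 < w x} := by
    refine ⟨S.smul_mem _ (S.add_mem hw'.1.1 (S.sup_mem hwH hw'.1.1)), ?_⟩
    filter_upwards [hw'.1.2] with x hx hxΩ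
    have e1 : w' x = 0 := hx hxΩ
    have e2 : w x = 0 := le_antisymm (not_lt.1 hxΩ) (hw0 x)
    simp [Pi.smul_apply, Pi.add_apply, Pi.sup_apply, e1, e2]
  have hmid := aux_midpoint S hw'.1.1 (S.sup_mem hwH hw'.1.1)
  have hminz := hw'.2 _ hzH0
  have hnn : 0 ≤ ∫ x, (w' x - (w ⊔ w') x) ^ 2 ∂m := integral_nonneg fun x => sq_nonneg _
  have hdiff0 : ∫ x, (w' x - (w ⊔ w') x) ^ 2 ∂m = 0 := by linarith
  have hwle : ∀ᵐ x ∂m, w x ≤ w' x := by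
    have hint : Integrable (fun x => (w' x - (w ⊔ w') x) ^ 2) m :=
      ((S.memL2 hw'.1.1).sub (S.memL2 (S.sup_mem hwH hw'.1.1))).integrable_sq
    have hae := (integral_eq_zero_iff_of_nonneg_ae
      (Eventually.of_forall fun x => sq_nonneg _) hint).1 hdiff0
    filter_upwards [hae] with x hx
    have hx' : (w' x - (w ⊔ w') x) ^ 2 = 0 := by simpa using hx
    have heq := (pow_eq_zero_iff two_ne_zero).1 hx'
    have h2 : w x ≤ (w ⊔ w') x := by
      simp only [Pi.sup_apply]
      exact le_sup_left
    linarith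
  have hnull : m ({x | 0 < w x} \ {x | 0 < w' x}) = 0 := by
    rw [eventually_iff, mem_ae_iff] at hwle
    apply measure_mono_null ?_ hwle
    rintro x ⟨hx1, hx2⟩
    simp only [Set.mem_compl_iff, Set.mem_setOf_eq]
    intro h
    exact hx2 (lt_of_lt_of_le hx1 h)
  exact ⟨φ, w, hφ, hwH, hconvw, hΩmeas, w', hw', hnull⟩

end AbsSob
end

section
/- If the energy sets Ω_n weak-γ-converge to Ω with w = L²-lim w_{Ω_n}, then w ≤ w_Ω m-a.e. -/
open MeasureTheory Filter
open scoped ENNReal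

namespace AbsSob

variable {X : Type*} [MeasurableSpace X]

variable {m : Measure X}

section Aux

variable {m : Measure X} [IsFiniteMeasure m]

lemma intg (S : Setting X m) {u : X → ℝ} (hu : u ∈ S.H) : Integrable u m :=
  (S.memL2 hu).integrable one_le_two

lemma int_sq (S : Setting X m) {u : X → ℝ} (hu : u ∈ S.H) :
    Integrable (fun x => u x ^ 2) m := (S.memL2 hu).integrable_sq

lemma int_Dsq (S : Setting X m) {u : X → ℝ} (hu : u ∈ S.H) :
    Integrable (fun x => S.D u x ^ 2) m := (S.gradL2 hu).integrable_sq

lemma neg_mem (S : Setting X m) {u : X → ℝ} (hu : u ∈ S.H) : -u ∈ S.H := by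
  rw [← neg_one_smul ℝ u]; exact S.smul_mem _ hu

lemma D_neg (S : Setting X m) {u : X → ℝ} (hu : u ∈ S.H) :
    ∀ᵐ x ∂m, S.D (-u) x = S.D u x := by
  have h := S.D3 (-1) hu
  rw [show ((-1 : ℝ) • u) = -u from neg_one_smul ℝ u] at h
  filter_upwards [h] with x hx
  simpa using hx

lemma D_zero (S : Setting X m) : ∀ᵐ x ∂m, S.D (fun _ => 0) x = 0 := by
  have h := S.D3 0 S.zero_mem
  have e : (0 : ℝ) • (fun _ : X => (0 : ℝ)) = fun _ : X => (0 : ℝ) := by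
    funext x; simp
  rw [e] at h
  filter_upwards [h] with x hx
  simpa using hx

lemma D_inf (S : Setting X m) {u v : X → ℝ} (hu : u ∈ S.H) (hv : v ∈ S.H) :
    ∀ᵐ x ∂m, S.D (u ⊓ v) x = if v x < u x then S.D v x else S.D u x := by
  have hnv : -v ∈ S.H := neg_mem S hv
  have hnu : -u ∈ S.H := neg_mem S hu
  have e : u ⊓ v = -((-v) ⊔ (-u)) := by
    funext x
    simp only [Pi.inf_apply, Pi.neg_apply, Pi.sup_apply]
    rw [max_neg_neg, neg_neg, min_comm]
  filter_upwards [S.D4 hnv hnu, D_neg S (S.sup_mem hnv hnu), D_neg S hv, D_neg S hu]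
    with x h4 hneg hv' hu'
  rw [e, hneg, h4]
  simp only [Pi.neg_apply, neg_lt_neg_iff, hv', hu']

lemma F_one_def (S : Setting X m) (u : X → ℝ) :
    F S 1 (fun _ => 1) u =
      (1 / 2) * ∫ x, S.D u x ^ 2 ∂m + (1 / 2) * ∫ x, u x ^ 2 ∂m - ∫ x, u x ∂m := by
  simp [F]

lemma F_lattice (S : Setting X m) {u v : X → ℝ} (hu : u ∈ S.H) (hv : v ∈ S.H) :
    F S 1 (fun _ => 1) (u ⊔ v) + F S 1 (fun _ => 1) (u ⊓ v)
      = F S 1 (fun _ => 1) u + F S 1 (fun _ => 1) v := by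
  have hsup := S.sup_mem hu hv
  have hinf := S.inf_mem hu hv
  have hD : ∫ x, S.D (u ⊔ v) x ^ 2 ∂m + ∫ x, S.D (u ⊓ v) x ^ 2 ∂m
      = ∫ x, S.D u x ^ 2 ∂m + ∫ x, S.D v x ^ 2 ∂m := by
    rw [← integral_add (int_Dsq S hsup) (int_Dsq S hinf),
      ← integral_add (int_Dsq S hu) (int_Dsq S hv)]
    refine integral_congr_ae ?_
    filter_upwards [S.D4 hu hv, D_inf S hu hv] with x h1 h2
    by_cases h : v x < u x <;> simp only [h1, h2, if_pos, if_neg, h, if_true, if_false] <;> ring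
  have hsq : ∫ x, (u ⊔ v) x ^ 2 ∂m + ∫ x, (u ⊓ v) x ^ 2 ∂m
      = ∫ x, u x ^ 2 ∂m + ∫ x, v x ^ 2 ∂m := by
    rw [← integral_add (int_sq S hsup) (int_sq S hinf),
      ← integral_add (int_sq S hu) (int_sq S hv)]
    refine integral_congr_ae (Filter.Eventually.of_forall fun x => ?_)
    simp only [Pi.sup_apply, Pi.inf_apply]
    rcases le_total (u x) (v x) with h | h
    · rw [max_eq_right h, min_eq_left h]; ring
    · rw [max_eq_left h, min_eq_right h]
  have hlin : ∫ x, (u ⊔ v) x ∂m + ∫ x, (u ⊓ v) x ∂m = ∫ x, u x ∂m + ∫ x, v x ∂m := by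
    rw [← integral_add (intg S hsup) (intg S hinf), ← integral_add (intg S hu) (intg S hv)]
    refine integral_congr_ae (Filter.Eventually.of_forall fun x => ?_)
    simp only [Pi.sup_apply, Pi.inf_apply]
    exact max_add_min _ _
  rw [F_one_def, F_one_def, F_one_def, F_one_def]
  linarith

lemma minimizer_nonneg (S : Setting X m) {Ω : Set X} {v : X → ℝ}
    (h : IsMinimizer S Ω 1 (fun _ => 1) v) : ∀ᵐ x ∂m, 0 ≤ v x := by
  obtain ⟨⟨hvH, hv0⟩, hmin⟩ := h
  set z : X → ℝ := fun _ => 0 with hz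
  have hzH : z ∈ S.H := S.zero_mem
  have hsH : v ⊔ z ∈ S.H := S.sup_mem hvH hzH
  have hs0 : v ⊔ z ∈ H0 S Ω := by
    refine ⟨hsH, ?_⟩
    filter_upwards [hv0] with x hx h'
    simp [Pi.sup_apply, hx h', hz]
  have hA : ∫ x, S.D (v ⊔ z) x ^ 2 ∂m ≤ ∫ x, S.D v x ^ 2 ∂m := by
    refine integral_mono_ae (int_Dsq S hsH) (int_Dsq S hvH) ?_
    filter_upwards [S.D4 hvH hzH, D_zero S] with x h4 h0
    rw [h4]
    by_cases hc : z x < v x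
    · rw [if_pos hc]
    · rw [if_neg hc, show S.D z x = 0 from h0]
      simpa using sq_nonneg (S.D v x)
  have hB : ∫ x, (v ⊔ z) x ^ 2 ∂m ≤ ∫ x, v x ^ 2 ∂m := by
    refine integral_mono_ae (int_sq S hsH) (int_sq S hvH)
      (Filter.Eventually.of_forall fun x => ?_)
    simp only [Pi.sup_apply, hz]
    rcases le_or_gt (v x) 0 with h | h
    · rw [max_eq_right h]; simpa using sq_nonneg (v x)
    · rw [max_eq_left h.le]
  have hC : ∫ x, v x ∂m ≤ ∫ x, (v ⊔ z) x ∂m := by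
    refine integral_mono_ae (intg S hvH) (intg S hsH)
      (Filter.Eventually.of_forall fun x => ?_)
    exact le_max_left _ _
  have hm := hmin _ hs0
  rw [F_one_def, F_one_def] at hm
  have hCeq : ∫ x, (v ⊔ z) x ∂m = ∫ x, v x ∂m := by linarith
  have hzero : ∫ x, ((v ⊔ z) x - v x) ∂m = 0 := by
    rw [integral_sub (intg S hsH) (intg S hvH), hCeq, sub_self]
  have hae := (integral_eq_zero_iff_of_nonneg_ae
      (Filter.Eventually.of_forall fun x => by
        simp only [Pi.sub_apply, Pi.sup_apply, Pi.zero_apply, sub_nonneg, hz]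
        exact le_max_left _ _)
      ((intg S hsH).sub (intg S hvH))).1 hzero
  filter_upwards [hae] with x hx
  have hx' : max (v x) 0 - v x = 0 := hx
  have h2 : max (v x) 0 = v x := by linarith
  have h3 := le_max_right (v x) (0 : ℝ)
  rwa [h2] at h3

lemma minimizer_unique (S : Setting X m) {Ω : Set X} {u v : X → ℝ}
    (hu : IsMinimizer S Ω 1 (fun _ => 1) u) (hv : IsMinimizer S Ω 1 (fun _ => 1) v) :
    ∀ᵐ x ∂m, u x = v x := by
  obtain ⟨⟨huH, hu0⟩, humin⟩ := hu
  obtain ⟨⟨hvH, hv0⟩, hvmin⟩ := hv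
  set mid : X → ℝ := (1/2 : ℝ) • u + (1/2 : ℝ) • v with hmid
  have hmidH : mid ∈ S.H := S.add_mem (S.smul_mem _ huH) (S.smul_mem _ hvH)
  have hmid0 : mid ∈ H0 S Ω := by
    refine ⟨hmidH, ?_⟩
    filter_upwards [hu0, hv0] with x h1 h2 hx
    simp [hmid, Pi.add_apply, Pi.smul_apply, h1 hx, h2 hx]
  have hmidx : ∀ x, mid x = (1/2) * u x + (1/2) * v x := fun x => by
    simp [hmid, Pi.add_apply, Pi.smul_apply, smul_eq_mul]
  have hiuv : Integrable (fun x => (u x - v x) ^ 2) m :=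
    ((S.memL2 huH).sub (S.memL2 hvH)).integrable_sq
  have hB : ∫ x, mid x ^ 2 ∂m
      = (1/2) * ∫ x, u x ^ 2 ∂m + (1/2) * ∫ x, v x ^ 2 ∂m
        - (1/4) * ∫ x, (u x - v x) ^ 2 ∂m := by
    have h1 : Integrable (fun x => (1/2) * u x ^ 2 + (1/2) * v x ^ 2) m :=
      ((int_sq S huH).const_mul _).add ((int_sq S hvH).const_mul _)
    have h2 : Integrable (fun x => (1/4) * (u x - v x) ^ 2) m := hiuv.const_mul _
    have h0 : ∫ x, mid x ^ 2 ∂m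
        = ∫ x, (((1/2) * u x ^ 2 + (1/2) * v x ^ 2) - (1/4) * (u x - v x) ^ 2) ∂m := by
      refine integral_congr_ae (Filter.Eventually.of_forall fun x => ?_)
      show mid x ^ 2 = _
      rw [hmidx x]; ring
    rw [h0, integral_sub h1 h2,
      integral_add ((int_sq S huH).const_mul _) ((int_sq S hvH).const_mul _),
      integral_const_mul, integral_const_mul, integral_const_mul]
  have hC : ∫ x, mid x ∂m = (1/2) * ∫ x, u x ∂m + (1/2) * ∫ x, v x ∂m := by
    have h0 : ∫ x, mid x ∂m = ∫ x, ((1/2) * u x + (1/2) * v x) ∂m :=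
      integral_congr_ae (Filter.Eventually.of_forall fun x => hmidx x)
    rw [h0, integral_add ((intg S huH).const_mul _) ((intg S hvH).const_mul _),
      integral_const_mul, integral_const_mul]
  have hA : ∫ x, S.D mid x ^ 2 ∂m
      ≤ (1/2) * ∫ x, S.D u x ^ 2 ∂m + (1/2) * ∫ x, S.D v x ^ 2 ∂m := by
    have hint : Integrable (fun x => (1/2) * S.D u x ^ 2 + (1/2) * S.D v x ^ 2) m :=
      ((int_Dsq S huH).const_mul _).add ((int_Dsq S hvH).const_mul _)
    have hle : ∫ x, S.D mid x ^ 2 ∂m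
        ≤ ∫ x, ((1/2) * S.D u x ^ 2 + (1/2) * S.D v x ^ 2) ∂m := by
      refine integral_mono_ae (int_Dsq S hmidH) hint ?_
      filter_upwards [S.D2 (S.smul_mem (1/2 : ℝ) huH) (S.smul_mem (1/2 : ℝ) hvH),
        S.D3 (1/2 : ℝ) huH, S.D3 (1/2 : ℝ) hvH, S.D1 hmidH, S.D1 huH, S.D1 hvH]
        with x h2 h3u h3v h1 h1u h1v
      have hle : S.D mid x ≤ (1/2) * S.D u x + (1/2) * S.D v x := by
        rw [hmid]
        calc S.D ((1/2 : ℝ) • u + (1/2 : ℝ) • v) x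
            ≤ S.D ((1/2 : ℝ) • u) x + S.D ((1/2 : ℝ) • v) x := h2
          _ = (1/2) * S.D u x + (1/2) * S.D v x := by
              rw [h3u, h3v, show |(1/2 : ℝ)| = (1/2 : ℝ) from by norm_num]
      nlinarith [sq_nonneg (S.D u x - S.D v x)]
    rw [integral_add ((int_Dsq S huH).const_mul _) ((int_Dsq S hvH).const_mul _),
      integral_const_mul, integral_const_mul] at hle
    exact hle
  have humv : F S 1 (fun _ => 1) u = F S 1 (fun _ => 1) v :=
    le_antisymm (humin _ ⟨hvH, hv0⟩) (hvmin _ ⟨huH, hu0⟩)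
  have hm := humin _ hmid0
  rw [F_one_def, F_one_def] at hm humv
  have hkey : ∫ x, (u x - v x) ^ 2 ∂m ≤ 0 := by
    rw [hB, hC] at hm
    linarith
  have hzero : ∫ x, (u x - v x) ^ 2 ∂m = 0 :=
    le_antisymm hkey (integral_nonneg fun x => sq_nonneg _)
  have hae := (integral_eq_zero_iff_of_nonneg_ae
    (Filter.Eventually.of_forall fun x => sq_nonneg _) hiuv).1 hzero
  filter_upwards [hae] with x hx
  have : (u x - v x) ^ 2 = 0 := hx
  have h2 : u x - v x = 0 := (pow_eq_zero_iff two_ne_zero).mp this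
  linarith

lemma tendsto_int_of_L2 {f : ℕ → X → ℝ} {g : X → ℝ} (hf : ∀ n, MemLp (f n) 2 m)
    (hg : MemLp g 2 m)
    (h : Tendsto (fun n => ∫ x, (f n x - g x) ^ 2 ∂m) atTop (nhds 0)) :
    Tendsto (fun n => ∫ x, (f n x) ^ 2 ∂m) atTop (nhds (∫ x, g x ^ 2 ∂m)) ∧
      Tendsto (fun n => ∫ x, f n x ∂m) atTop (nhds (∫ x, g x ∂m)) := by
  classical
  have key : ∀ (φ : X → ℝ) (h1 : MemLp φ 2 m), ‖h1.toLp φ‖ ^ 2 = ∫ x, φ x ^ 2 ∂m := by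
    intro φ h1
    rw [← real_inner_self_eq_norm_sq, MeasureTheory.L2.inner_def]
    refine integral_congr_ae ?_
    filter_upwards [h1.coeFn_toLp] with x hx
    rw [hx]
    simp [RCLike.inner_apply, sq]
  have hone : MemLp (fun _ : X => (1 : ℝ)) 2 m := memLp_const 1
  have key2 : ∀ (φ : X → ℝ) (h1 : MemLp φ 2 m),
      (inner ℝ (h1.toLp φ) (hone.toLp _) : ℝ) = ∫ x, φ x ∂m := by
    intro φ h1
    rw [MeasureTheory.L2.inner_def]
    refine integral_congr_ae ?_
    filter_upwards [h1.coeFn_toLp, hone.coeFn_toLp] with x hx hy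
    rw [hx, hy]
    simp [RCLike.inner_apply]
  have htend : Tendsto (fun n => (hf n).toLp (f n)) atTop (nhds (hg.toLp g)) := by
    rw [tendsto_iff_norm_sub_tendsto_zero]
    have hnorm : ∀ n, ‖(hf n).toLp (f n) - hg.toLp g‖
        = Real.sqrt (∫ x, (f n x - g x) ^ 2 ∂m) := by
      intro n
      have hk : ‖((hf n).sub hg).toLp (f n - g)‖ ^ 2 = ∫ x, (f n x - g x) ^ 2 ∂m := by
        rw [key (f n - g) ((hf n).sub hg)]; rfl
      rw [← MemLp.toLp_sub, ← hk, Real.sqrt_sq (norm_nonneg _)]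
    simp only [hnorm]
    have : Tendsto Real.sqrt (nhds 0) (nhds 0) := by
      simpa using Real.continuous_sqrt.tendsto 0
    exact this.comp h
  constructor
  · have h1 : Tendsto (fun n => ‖(hf n).toLp (f n)‖ ^ 2) atTop (nhds (‖hg.toLp g‖ ^ 2)) :=
      (htend.norm).pow 2
    simpa only [key _ (hf _), key _ hg] using h1
  · have h2 : Tendsto (fun n => (inner ℝ ((hf n).toLp (f n)) (hone.toLp _) : ℝ)) atTop
        (nhds (inner ℝ (hg.toLp g) (hone.toLp _) : ℝ)) :=
      htend.inner tendsto_const_nhds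
    simpa only [key2 _ (hf _), key2 _ hg] using h2

end Aux


/-- if energy sets `Ωₙ` weak-γ-converge to `Ω = {w > 0}` with
`w = L²-lim w_{Ωₙ}`, then `w ≤ w_Ω` m-a.e. -/
theorem statement_15 {X : Type*} [MeasurableSpace X] {m : Measure X} [IsFiniteMeasure m]
    (S : Setting X m) (hcpt : CompactEmbedding S) (hlsc : GradLSC S)
    (Ω : ℕ → Set X) (hΩ : ∀ n, MeasurableSet (Ω n))
    (wn : ℕ → X → ℝ) (hwn : ∀ n, IsMinimizer S (Ω n) 1 (fun _ => 1) (wn n))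
    (hEn : ∀ n, m (Ω n \ {x | 0 < wn n x}) = 0)
    {w : X → ℝ} (hwH : w ∈ S.H)
    (hconv : Tendsto (fun n => ∫ x, (wn n x - w x) ^ 2 ∂m) atTop (nhds 0))
    {W : X → ℝ} (hW : IsMinimizer S {x | 0 < w x} 1 (fun _ => 1) W) :
    ∀ᵐ x ∂m, w x ≤ W x := by
  classical
  have hwnH : ∀ n, wn n ∈ S.H := fun n => (hwn n).1.1
  have hWH : W ∈ S.H := hW.1.1
  have hWpos : ∀ᵐ x ∂m, 0 ≤ W x := minimizer_nonneg S hW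
  have hwnpos : ∀ n, ∀ᵐ x ∂m, 0 ≤ wn n x := fun n => minimizer_nonneg S (hwn n)
  have hqH : w ⊓ (fun _ => (0 : ℝ)) ∈ S.H := S.inf_mem hwH S.zero_mem
  have hwpos : ∀ᵐ x ∂m, 0 ≤ w x := by
    have hqint : Integrable (fun x => (w ⊓ fun _ => (0 : ℝ)) x ^ 2) m := int_sq S hqH
    have hle : ∀ n, ∫ x, (w ⊓ fun _ => (0 : ℝ)) x ^ 2 ∂m ≤ ∫ x, (wn n x - w x) ^ 2 ∂m := by
      intro n
      refine integral_mono_ae hqint (((S.memL2 (hwnH n)).sub (S.memL2 hwH)).integrable_sq) ?_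
      filter_upwards [hwnpos n] with x hx
      simp only [Pi.inf_apply]
      rcases le_or_gt 0 (w x) with h | h
      · rw [show (w x) ⊓ (0 : ℝ) = 0 from min_eq_right h]
        simpa using sq_nonneg (wn n x - w x)
      · rw [show (w x) ⊓ (0 : ℝ) = w x from min_eq_left h.le]
        nlinarith
    have h0 : ∫ x, (w ⊓ fun _ => (0 : ℝ)) x ^ 2 ∂m ≤ 0 := ge_of_tendsto' hconv hle
    have h0' : ∫ x, (w ⊓ fun _ => (0 : ℝ)) x ^ 2 ∂m = 0 :=
      le_antisymm h0 (integral_nonneg fun x => sq_nonneg _)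
    have hae := (integral_eq_zero_iff_of_nonneg_ae
      (Filter.Eventually.of_forall fun x => sq_nonneg _) hqint).1 h0'
    filter_upwards [hae] with x hx
    have hx' : (w ⊓ fun _ => (0 : ℝ)) x = 0 := by
      have : ((w ⊓ fun _ => (0 : ℝ)) x) ^ 2 = 0 := hx
      exact (pow_eq_zero_iff two_ne_zero).mp this
    simp only [Pi.inf_apply] at hx'
    exact min_eq_right_iff.mp hx'
  have hw0 : ∀ᵐ x ∂m, x ∉ {x | 0 < w x} → w x = 0 := by
    filter_upwards [hwpos] with x hx h'
    exact le_antisymm (not_lt.1 h') hx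
  have huiH : w ⊔ W ∈ S.H := S.sup_mem hwH hWH
  have hui0 : w ⊔ W ∈ H0 S {x | 0 < w x} := by
    refine ⟨huiH, ?_⟩
    filter_upwards [hw0, hW.1.2] with x h1 h2 hx
    simp only [Pi.sup_apply, h1 hx, h2 hx, max_self]
  set un : ℕ → X → ℝ := fun n => wn n ⊔ W with hun
  have hunH : ∀ n, un n ∈ S.H := fun n => S.sup_mem (hwnH n) hWH
  have hFle : ∀ n, F S 1 (fun _ => 1) (un n) ≤ F S 1 (fun _ => 1) W := by
    intro n
    have hinf0 : wn n ⊓ W ∈ H0 S (Ω n) := by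
      refine ⟨S.inf_mem (hwnH n) hWH, ?_⟩
      filter_upwards [(hwn n).1.2, hWpos] with x h1 h2 hx
      simp only [Pi.inf_apply, h1 hx]
      exact min_eq_left h2
    have hmin := (hwn n).2 _ hinf0
    have hlat := F_lattice S (hwnH n) hWH
    simp only [hun]
    linarith
  have hconv2 : Tendsto (fun n => ∫ x, (un n x - (w ⊔ W) x) ^ 2 ∂m) atTop (nhds 0) := by
    refine squeeze_zero (fun n => integral_nonneg fun x => sq_nonneg _) (fun n => ?_) hconv
    refine integral_mono_ae (((S.memL2 (hunH n)).sub (S.memL2 huiH)).integrable_sq)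
      (((S.memL2 (hwnH n)).sub (S.memL2 hwH)).integrable_sq)
      (Filter.Eventually.of_forall fun x => ?_)
    have habs := abs_max_sub_max_le_abs (wn n x) (w x) (W x)
    simp only [hun, Pi.sup_apply]
    rw [← sq_abs (max (wn n x) (W x) - max (w x) (W x)), ← sq_abs (wn n x - w x)]
    exact pow_le_pow_left₀ (abs_nonneg _) habs 2
  have hbound : ∃ C, ∀ n, normHsq S (un n) ≤ C := by
    refine ⟨6 * (F S 1 (fun _ => 1) W + (m Set.univ).toReal), fun n => ?_⟩
    have h1 := hFle n
    rw [F_one_def S (un n), F_one_def S W] at h1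
    have h2 : ∫ x, un n x ∂m ≤ (1 / 4) * ∫ x, un n x ^ 2 ∂m + (m Set.univ).toReal := by
      have h3 : ∫ x, un n x ∂m ≤ ∫ x, ((1 / 4) * un n x ^ 2 + 1) ∂m := by
        refine integral_mono_ae (intg S (hunH n))
          (((int_sq S (hunH n)).const_mul _).add (integrable_const 1))
          (Filter.Eventually.of_forall fun x => ?_)
        nlinarith [sq_nonneg (un n x - 2)]
      rwa [integral_add ((int_sq S (hunH n)).const_mul _) (integrable_const 1),
        integral_const_mul, integral_const, smul_eq_mul, mul_one] at h3
    have hA0 : (0 : ℝ) ≤ ∫ x, S.D (un n) x ^ 2 ∂m := integral_nonneg fun x => sq_nonneg _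
    have hB0 : (0 : ℝ) ≤ ∫ x, un n x ^ 2 ∂m := integral_nonneg fun x => sq_nonneg _
    unfold normHsq
    rw [F_one_def S W]
    linarith
  obtain ⟨-, hAliminf⟩ := hlsc un (w ⊔ W) hunH hbound hconv2
  obtain ⟨hBt, hCt⟩ := tendsto_int_of_L2 (fun n => S.memL2 (hunH n)) (S.memL2 huiH) hconv2
  set K := F S 1 (fun _ => 1) W with hK
  have hAn_le : ∀ n, ∫ x, S.D (un n) x ^ 2 ∂m
      ≤ 2 * K - ∫ x, un n x ^ 2 ∂m + 2 * ∫ x, un n x ∂m := by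
    intro n
    have h1 := hFle n
    rw [F_one_def S (un n)] at h1
    linarith
  have hLt : Tendsto (fun n => 2 * K - ∫ x, un n x ^ 2 ∂m + 2 * ∫ x, un n x ∂m) atTop
      (nhds (2 * K - ∫ x, (w ⊔ W) x ^ 2 ∂m + 2 * ∫ x, (w ⊔ W) x ∂m)) :=
    (tendsto_const_nhds.sub hBt).add (hCt.const_mul 2)
  have hbddA : IsBoundedUnder (· ≥ ·) atTop (fun n => ∫ x, S.D (un n) x ^ 2 ∂m) :=
    isBoundedUnder_of ⟨0, fun n => integral_nonneg fun x => sq_nonneg _⟩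
  have hliminf_le : liminf (fun n => ∫ x, S.D (un n) x ^ 2 ∂m) atTop
      ≤ 2 * K - ∫ x, (w ⊔ W) x ^ 2 ∂m + 2 * ∫ x, (w ⊔ W) x ∂m := by
    have h := Filter.liminf_le_liminf (Filter.Eventually.of_forall hAn_le)
      hbddA hLt.isBoundedUnder_le.isCoboundedUnder_ge
    rwa [hLt.liminf_eq] at h
  have hFui : F S 1 (fun _ => 1) (w ⊔ W) ≤ K := by
    rw [F_one_def]
    have := le_trans hAliminf hliminf_le
    linarith
  have huimin : IsMinimizer S {x | 0 < w x} 1 (fun _ => 1) (w ⊔ W) :=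
    ⟨hui0, fun z hz => le_trans hFui (by rw [hK]; exact hW.2 z hz)⟩
  have heq := minimizer_unique S huimin hW
  filter_upwards [heq] with x hx
  simp only [Pi.sup_apply] at hx
  calc w x ≤ max (w x) (W x) := le_max_left _ _
    _ = W x := hx

end AbsSob
end
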